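/- Fix an integer n ≥ 2 and define ℓ₁(θ) = θⁿ⁻¹ + ∑_{i=1}^{n−1} θⁱ/i + log(1−θ) for θ ∈ (0,1). Then ℓ₁ has exactly one zero θ₁ in (0,1); moreover ℓ₁(θ) > 0 for θ ∈ (0,θ₁), ℓ₁(θ) < 0 for θ ∈ (θ₁,1), and θ₁ > (n−1)/n. -/

import Mathlib

open Real Set Filter Topology

/-- `ℓ₁(θ) = θⁿ⁻¹ + ∑_{i=1}^{n−1} θⁱ/i + log(1−θ)`. -/
noncomputable def ell1 (n : ℕ) (θ : ℝ) : ℝ :=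
  θ ^ (n - 1) + (∑ i ∈ Finset.Icc 1 (n - 1), θ ^ i / (i : ℝ)) + Real.log (1 - θ)

namespace Stmt7Aux

noncomputable def g (k : ℕ) (θ : ℝ) : ℝ :=
  θ ^ k + (∑ i ∈ Finset.Icc 1 k, θ ^ i / (i : ℝ)) + Real.log (1 - θ)

lemma ell1_succ (k : ℕ) (θ : ℝ) : ell1 (k+1) θ = g k θ := by
  simp [ell1, g]

noncomputable def g' (k : ℕ) (θ : ℝ) : ℝ :=
  (k:ℝ) * θ^(k-1) + (∑ i ∈ Finset.Icc 1 k, θ^(i-1)) - 1/(1-θ)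

lemma hasDerivAt_g (k : ℕ) {θ : ℝ} (hθ : θ < 1) :
    HasDerivAt (g k) (g' k θ) θ := by
  have hne : (1:ℝ) - θ ≠ 0 := by linarith
  have h1 : HasDerivAt (fun θ : ℝ => θ ^ k) ((k:ℝ) * θ^(k-1)) θ := hasDerivAt_pow k θ
  have h2 : HasDerivAt (fun θ : ℝ => ∑ i ∈ Finset.Icc 1 k, θ ^ i / (i:ℝ))
      (∑ i ∈ Finset.Icc 1 k, θ^(i-1)) θ := by
    apply HasDerivAt.fun_sum
    intro i hi
    have hi1 : 1 ≤ i := (Finset.mem_Icc.mp hi).1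
    have hine : (i:ℝ) ≠ 0 := Nat.cast_ne_zero.mpr (by omega)
    have h := (hasDerivAt_pow i θ).div_const (i:ℝ)
    exact h.congr_deriv (mul_div_cancel_left₀ _ hine)
  have h3 : HasDerivAt (fun θ : ℝ => Real.log (1 - θ)) (-(1/(1-θ))) θ := by
    have h := ((hasDerivAt_const θ (1:ℝ)).sub (hasDerivAt_id θ)).log hne
    simpa [neg_div] using h
  have := (h1.add h2).add h3
  exact this.congr_deriv (by unfold g'; ring)

lemma sum_pow_mul (k : ℕ) (θ : ℝ) :
    (∑ i ∈ Finset.Icc 1 k, θ^(i-1)) * (1-θ) = 1 - θ^k := by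
  have h1 : (∑ i ∈ Finset.Icc 1 k, θ^(i-1)) = ∑ j ∈ Finset.range k, θ^j := by
    rw [← Finset.Ico_add_one_right_eq_Icc, Finset.sum_Ico_eq_sum_range]
    simp
  rw [h1]
  linear_combination -(geom_sum_mul θ k)

lemma g'_mul (k : ℕ) (hk : 1 ≤ k) {θ : ℝ} (hθ : θ < 1) :
    g' k θ * (1-θ) = θ^(k-1) * ((k:ℝ) - ((k:ℝ)+1)*θ) := by
  have hne : (1:ℝ) - θ ≠ 0 := by linarith
  have hpow : θ^(k-1) * θ = θ^k := by
    rw [← pow_succ, Nat.sub_add_cancel hk]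
  unfold g'
  rw [sub_mul, add_mul, sum_pow_mul, one_div, inv_mul_cancel₀ hne]
  linear_combination hpow

lemma g'_pos (k : ℕ) (hk : 1 ≤ k) {θ : ℝ} (h0 : 0 < θ) (hm : θ < (k:ℝ)/((k:ℝ)+1)) :
    0 < g' k θ := by
  have hk1 : (0:ℝ) < (k:ℝ)+1 := by positivity
  have h1 : θ < 1 := by
    have : (k:ℝ)/((k:ℝ)+1) < 1 := by
      rw [div_lt_one hk1]; linarith
    linarith
  have hmul := g'_mul k hk h1
  have hpos : 0 < θ^(k-1) * ((k:ℝ) - ((k:ℝ)+1)*θ) := by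
    apply mul_pos (by positivity)
    have := (lt_div_iff₀ hk1).mp hm
    linarith
  nlinarith [hmul, hpos]

lemma g'_neg (k : ℕ) (hk : 1 ≤ k) {θ : ℝ} (hm : (k:ℝ)/((k:ℝ)+1) < θ) (h1 : θ < 1) :
    g' k θ < 0 := by
  have hk1 : (0:ℝ) < (k:ℝ)+1 := by positivity
  have h0 : 0 < θ := lt_of_le_of_lt (by positivity) hm
  have hmul := g'_mul k hk h1
  have hneg : θ^(k-1) * ((k:ℝ) - ((k:ℝ)+1)*θ) < 0 := by
    apply mul_neg_of_pos_of_neg (by positivity)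
    have := (div_lt_iff₀ hk1).mp hm
    linarith
  nlinarith [hmul, hneg]

lemma contOn (k : ℕ) : ContinuousOn (g k) (Iio 1) := by
  apply ContinuousOn.add
  apply ContinuousOn.add
  · exact (continuous_pow k).continuousOn
  · exact (continuous_finset_sum _ fun i _ => (continuous_pow i).div_const _).continuousOn
  · apply ContinuousOn.log
    · exact (continuous_const.sub continuous_id).continuousOn
    · intro x hx
      simp only [mem_Iio] at hx
      intro h; linarith [h]

lemma g_zero (k : ℕ) (hk : 1 ≤ k) : g k 0 = 0 := by
  unfold g
  rw [zero_pow (by omega : k ≠ 0)]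
  have : (∑ i ∈ Finset.Icc 1 k, (0:ℝ) ^ i / (i : ℝ)) = 0 := by
    apply Finset.sum_eq_zero
    intro i hi
    have : i ≠ 0 := by have := (Finset.mem_Icc.mp hi).1; omega
    rw [zero_pow this, zero_div]
  rw [this]
  norm_num

lemma tendsto_g (k : ℕ) : Tendsto (g k) (𝓝[<] (1:ℝ)) atBot := by
  have h1 : Tendsto (fun θ : ℝ => θ^k + ∑ i ∈ Finset.Icc 1 k, θ^i/(i:ℝ)) (𝓝[<] (1:ℝ))
      (𝓝 ((1:ℝ)^k + ∑ i ∈ Finset.Icc 1 k, (1:ℝ)^i/(i:ℝ))) := by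
    have hc : Continuous (fun θ : ℝ => θ^k + ∑ i ∈ Finset.Icc 1 k, θ^i/(i:ℝ)) :=
      (continuous_pow k).add (continuous_finset_sum _ fun i _ => (continuous_pow i).div_const _)
    exact (hc.tendsto 1).mono_left nhdsWithin_le_nhds
  have ha : Tendsto (fun θ : ℝ => 1 - θ) (𝓝[<] (1:ℝ)) (𝓝[>] (0:ℝ)) := by
    apply tendsto_nhdsWithin_of_tendsto_nhds_of_eventually_within
    · have hc : Continuous (fun θ : ℝ => 1 - θ) := continuous_const.sub continuous_id
      have h2 : Tendsto (fun θ : ℝ => 1 - θ) (𝓝 1) (𝓝 0) := by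
        have := hc.tendsto (1:ℝ)
        simpa using this
      exact h2.mono_left nhdsWithin_le_nhds
    · filter_upwards [self_mem_nhdsWithin] with x hx
      simp only [mem_Iio] at hx
      simp only [mem_Ioi]
      linarith
  have h2 : Tendsto (fun θ : ℝ => Real.log (1 - θ)) (𝓝[<] (1:ℝ)) atBot :=
    Real.tendsto_log_nhdsGT_zero.comp ha
  exact h1.add_atBot h2

end Stmt7Aux

open Stmt7Aux in
/-- for `n ≥ 2`, `ℓ₁` has exactly one zero `θ₁` in `(0,1)`;
`ℓ₁ > 0` on `(0,θ₁)`, `ℓ₁ < 0` on `(θ₁,1)`, and `θ₁ > (n−1)/n`. -/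
theorem stmt7 (n : ℕ) (hn : 2 ≤ n) :
    ∃ θ1 ∈ Set.Ioo (0:ℝ) 1,
      ell1 n θ1 = 0 ∧
      (∀ θ ∈ Set.Ioo (0:ℝ) 1, ell1 n θ = 0 → θ = θ1) ∧
      (∀ θ ∈ Set.Ioo (0:ℝ) θ1, 0 < ell1 n θ) ∧
      (∀ θ ∈ Set.Ioo θ1 (1:ℝ), ell1 n θ < 0) ∧
      ((n:ℝ) - 1) / (n:ℝ) < θ1 := by
  obtain ⟨k, rfl⟩ : ∃ k, n = k + 1 := ⟨n - 1, by omega⟩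
  have hk : 1 ≤ k := by omega
  have hell : ∀ θ : ℝ, ell1 (k+1) θ = g k θ := fun θ => ell1_succ k θ
  set m : ℝ := (k:ℝ)/((k:ℝ)+1) with hm_def
  have hk1 : (0:ℝ) < (k:ℝ)+1 := by positivity
  have hkpos : (0:ℝ) < (k:ℝ) := by exact_mod_cast Nat.pos_of_ne_zero (by omega)
  have hm0 : 0 < m := div_pos hkpos hk1
  have hm1 : m < 1 := by rw [hm_def, div_lt_one hk1]; linarith
  -- monotonicity on [0, m]
  have hmono : StrictMonoOn (g k) (Icc 0 m) := by
    apply strictMonoOn_of_deriv_pos (convex_Icc 0 m)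
    · exact (contOn k).mono (fun x hx => lt_of_le_of_lt hx.2 hm1)
    · intro x hx
      rw [interior_Icc] at hx
      rw [(hasDerivAt_g k (lt_trans hx.2 hm1)).deriv]
      exact g'_pos k hk hx.1 hx.2
  -- antitone on [m, 1)
  have hanti : StrictAntiOn (g k) (Ico m 1) := by
    apply strictAntiOn_of_deriv_neg (convex_Ico m 1)
    · exact (contOn k).mono (fun x hx => hx.2)
    · intro x hx
      rw [interior_Ico] at hx
      rw [(hasDerivAt_g k hx.2).deriv]
      exact g'_neg k hk hx.1 hx.2
  have hg0 : g k 0 = 0 := g_zero k hk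
  have hgm : 0 < g k m := by
    have := hmono (left_mem_Icc.mpr hm0.le) (right_mem_Icc.mpr hm0.le) hm0
    rwa [hg0] at this
  -- find b near 1 with g k b < 0
  obtain ⟨b, hb_mem, hb_neg⟩ : ∃ b, b ∈ Ioo m 1 ∧ g k b < 0 := by
    have h1 : ∀ᶠ θ in 𝓝[<] (1:ℝ), g k θ < 0 := (tendsto_g k).eventually (eventually_lt_atBot 0)
    have h2 : Ioo m 1 ∈ 𝓝[<] (1:ℝ) := Ioo_mem_nhdsLT_of_mem ⟨hm1, le_refl 1⟩
    obtain ⟨b, hb1, hb2⟩ := (h1.and (eventually_of_mem h2 fun x hx => hx)).exists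
    exact ⟨b, hb2, hb1⟩
  -- IVT on [m, b]
  obtain ⟨θ1, hθ1_mem, hθ1_zero⟩ : ∃ θ1, θ1 ∈ Ioo m b ∧ g k θ1 = 0 := by
    have hcont : ContinuousOn (g k) (Icc m b) :=
      (contOn k).mono (fun x hx => lt_of_le_of_lt hx.2 hb_mem.2)
    have := intermediate_value_Ioo' hb_mem.1.le hcont
    have h0 : (0:ℝ) ∈ Ioo (g k b) (g k m) := ⟨hb_neg, hgm⟩
    obtain ⟨θ1, hθ1a, hθ1b⟩ := this h0
    exact ⟨θ1, hθ1a, hθ1b⟩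
  have hθ1_m : m < θ1 := hθ1_mem.1
  have hθ1_1 : θ1 < 1 := lt_trans hθ1_mem.2 hb_mem.2
  have hθ1_0 : 0 < θ1 := lt_trans hm0 hθ1_m
  have hθ1_Ico : θ1 ∈ Ico m 1 := ⟨hθ1_m.le, hθ1_1⟩
  -- positivity on (0, θ1)
  have hpos : ∀ θ ∈ Ioo (0:ℝ) θ1, 0 < g k θ := by
    intro θ hθ
    rcases le_or_gt θ m with hle | hgt
    · have := hmono (left_mem_Icc.mpr hm0.le) ⟨hθ.1.le, hle⟩ hθ.1
      rw [hg0] at this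
      rcases eq_or_lt_of_le hle with heq | hlt
      · rw [heq]; exact hgm
      · exact this
    · have := hanti ⟨hgt.le, lt_trans hθ.2 hθ1_1⟩ hθ1_Ico hθ.2
      rw [hθ1_zero] at this
      exact this
  -- negativity on (θ1, 1)
  have hneg : ∀ θ ∈ Ioo θ1 (1:ℝ), g k θ < 0 := by
    intro θ hθ
    have := hanti hθ1_Ico ⟨le_trans hθ1_m.le hθ.1.le, hθ.2⟩ hθ.1
    rwa [hθ1_zero] at this
  refine ⟨θ1, ⟨hθ1_0, hθ1_1⟩, ?_, ?_, ?_, ?_, ?_⟩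
  · rw [hell]; exact hθ1_zero
  · intro θ hθ hzero
    rw [hell] at hzero
    rcases lt_trichotomy θ θ1 with h | h | h
    · exact absurd hzero (ne_of_gt (hpos θ ⟨hθ.1, h⟩))
    · exact h
    · exact absurd hzero (ne_of_lt (hneg θ ⟨h, hθ.2⟩))
  · intro θ hθ; rw [hell]; exact hpos θ hθ
  · intro θ hθ; rw [hell]; exact hneg θ hθ
  · have heq : (((k+1:ℕ)):ℝ) - 1 = (k:ℝ) := by push_cast; ring
    have heq2 : (((k+1:ℕ)):ℝ) = (k:ℝ) + 1 := by push_cast; ring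
    rw [heq, heq2]
    exact hθ1_m
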